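/- If two metric spaces (X,d) and (Y,ρ) are almost uniformly homeomorphic (there is a bijection f with both f and f⁻¹ almost uniformly continuous), then (X,d) is cofinally complete if and only if (Y,ρ) is cofinally complete. -/

import Mathlib

open Metric Filter

/-- A sequence is cofinally Cauchy if for every ε>0 there is an infinite index set
on which all pairwise distances are < ε. -/
def CofinallyCauchy {X : Type*} [MetricSpace X] (x : ℕ → X) : Prop :=
  ∀ ε > 0, ∃ N : Set ℕ, N.Infinite ∧ ∀ n ∈ N, ∀ j ∈ N, dist (x n) (x j) < ε

/-- A function is almost bounded if for every ε>0 there is δ>0 such that the image of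
every set of diameter < δ is contained in a finite union of open ε-balls. -/
def AlmostBounded {X Y : Type*} [MetricSpace X] [MetricSpace Y] (f : X → Y) : Prop :=
  ∀ ε > 0, ∃ δ > 0, ∀ A : Set X, EMetric.diam A < ENNReal.ofReal δ →
    ∃ B : Finset Y, f '' A ⊆ ⋃ b ∈ B, Metric.ball b ε

/-- A metric space is cofinally complete if every cofinally Cauchy sequence clusters. -/
def CofinallyComplete (X : Type*) [MetricSpace X] : Prop :=
  ∀ x : ℕ → X, CofinallyCauchy x → ∃ p : X, MapClusterPt p atTop x

/-- The local total boundedness functional. -/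
noncomputable def tFun {X : Type*} [MetricSpace X] (x : X) : ℝ :=
  sSup {ε : ℝ | 0 < ε ∧ TotallyBounded (Metric.ball x ε)}

lemma aux_transfer {X Y : Type*} [MetricSpace X] [MetricSpace Y] (f : X → Y) (g : Y → X)
    (hfg : ∀ y, f (g y) = y) (hfc : Continuous f) (hgb : AlmostBounded g)
    (hX : CofinallyComplete X) : CofinallyComplete Y := by
  intro y hy
  -- g ∘ y is cofinally Cauchy
  have hcc : CofinallyCauchy (fun n => g (y n)) := by
    intro ε hε
    obtain ⟨δ, hδ, hδb⟩ := hgb (ε / 2) (by linarith)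
    obtain ⟨N, hNinf, hN⟩ := hy (δ / 2) (by linarith)
    set A : Set Y := y '' N with hA
    have hdiam : EMetric.diam A < ENNReal.ofReal δ := by
      have : EMetric.diam A ≤ ENNReal.ofReal (δ / 2) := by
        apply EMetric.diam_le
        rintro a ⟨n, hn, rfl⟩ b ⟨j, hj, rfl⟩
        rw [edist_dist]
        exact ENNReal.ofReal_le_ofReal (le_of_lt (hN n hn j hj))
      refine lt_of_le_of_lt this ?_
      rw [ENNReal.ofReal_lt_ofReal_iff hδ]; linarith
    obtain ⟨B, hB⟩ := hδb A hdiam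
    -- pigeonhole: some ball contains infinitely many g (y n)
    have hcover : N ⊆ ⋃ b ∈ B, {n : ℕ | g (y n) ∈ Metric.ball b (ε / 2)} := by
      intro n hn
      have : g (y n) ∈ ⋃ b ∈ B, Metric.ball b (ε / 2) :=
        hB ⟨y n, ⟨n, hn, rfl⟩, rfl⟩
      simpa using this
    have : ∃ b ∈ B, ({n : ℕ | g (y n) ∈ Metric.ball b (ε / 2)} ∩ N).Infinite := by
      by_contra h
      push_neg at h
      have hfin : (⋃ b ∈ B, {n : ℕ | g (y n) ∈ Metric.ball b (ε / 2)} ∩ N).Finite :=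
        Set.Finite.biUnion B.finite_toSet fun b hb => h b hb
      exact hNinf (hfin.subset (fun n hn => by
        obtain ⟨b, hb, hnb⟩ := Set.mem_iUnion₂.mp (hcover hn)
        exact Set.mem_iUnion₂.mpr ⟨b, hb, hnb, hn⟩))
    obtain ⟨b, _, hbinf⟩ := this
    refine ⟨_, hbinf, fun n hn j hj => ?_⟩
    have h1 : dist (g (y n)) b < ε / 2 := hn.1
    have h2 : dist (g (y j)) b < ε / 2 := hj.1
    calc dist (g (y n)) (g (y j)) ≤ dist (g (y n)) b + dist b (g (y j)) := dist_triangle _ _ _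
      _ < ε / 2 + ε / 2 := by rw [dist_comm b]; linarith
      _ = ε := by ring
  obtain ⟨p, hp⟩ := hX _ hcc
  refine ⟨f p, ?_⟩
  have := hp.continuousAt_comp hfc.continuousAt
  have heq : (f ∘ fun n => g (y n)) = y := funext fun n => hfg (y n)
  rwa [heq] at this

/-- If X and Y are almost uniformly homeomorphic, then X is cofinally complete iff Y is. -/
theorem almostUniformHomeomorph_cofinallyComplete {X Y : Type*} [MetricSpace X]
    [MetricSpace Y] (f : X → Y) (g : Y → X)
    (hgf : ∀ x, g (f x) = x) (hfg : ∀ y, f (g y) = y)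
    (hfc : Continuous f) (hfb : AlmostBounded f)
    (hgc : Continuous g) (hgb : AlmostBounded g) :
    CofinallyComplete X ↔ CofinallyComplete Y :=
  ⟨aux_transfer f g hfg hfc hgb, aux_transfer g f hgf hgc hfb⟩
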